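/- With the insertion noising process, the conditional probability that the sequence just before the last insertion was Y (a single-deletion of X_t) satisfies p(prev(X_t) = Y | X₀, X_t, M_t) = ali(X₀, Y) / (M_t · ali(X₀, X_t)), where the probability of a specific deletion at a position is counted once per position. -/

import Mathlib

open Finset

/-- Number of subsequence embeddings of `X₀` into `X`. -/
noncomputable def ali {B : Type*} {L N : ℕ} (X₀ : Fin L → B) (X : Fin N → B) : ℕ :=
  Nat.card {f : Fin L → Fin N // StrictMono f ∧ ∀ i, X (f i) = X₀ i}

/-- Backward transition probability of the insertion noising process: with
`p(X | X₀, M) = C(L+M, L)⁻¹·ali(X₀, X)·∏π(X)/∏π(X₀)` and the forward step from `Y` to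
`X_t` inserting a letter from `π` at one of the `L+M_t` positions uniformly (counted
once per position), the conditional probability that the sequence just before the last
insertion was `Y = X_t^{(−j)}` is
`p(Y | X₀, M−1)·π(X_t^{(j)})·(L+M_t)⁻¹ / p(X_t | X₀, M_t) = ali(X₀, Y)/(M_t·ali(X₀, X_t))`. -/
theorem prev_insertion_posterior
    {B : Type*} (π : B → ℝ) (hπpos : ∀ b, 0 < π b)
    (L m : ℕ) (X₀ : Fin L → B)
    (X : Fin (L + (m + 1)) → B) (j : Fin (L + (m + 1)))
    (Y : Fin (L + m) → B) (hY : Y = fun i => X (j.succAbove i))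
    (hali : ali X₀ X ≠ 0) :
    (((L + m).choose L : ℝ)⁻¹ * (ali X₀ Y : ℝ) * ((∏ i, π (Y i)) / ∏ i, π (X₀ i)))
        * (π (X j) * ((L + m + 1 : ℝ))⁻¹)
      / (((L + (m + 1)).choose L : ℝ)⁻¹ * (ali X₀ X : ℝ) *
          ((∏ i, π (X i)) / ∏ i, π (X₀ i)))
      = (ali X₀ Y : ℝ) / ((m + 1 : ℝ) * (ali X₀ X : ℝ)) := by
  have hprod : ∏ i, π (X i) = π (X j) * ∏ i, π (Y i) := by
    subst hY; exact Fin.prod_univ_succAbove (fun i => π (X i)) j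
  have h1 : (L + m).choose m = (L + m).choose L := by
    have h := Nat.choose_symm (show L ≤ L + m from by omega)
    rwa [show L + m - L = m from by omega] at h
  have h2 : (L + m + 1).choose (m + 1) = (L + m + 1).choose L := by
    have h := Nat.choose_symm (show L ≤ L + m + 1 from by omega)
    rwa [show L + m + 1 - L = m + 1 from by omega] at h
  have hchoose : ((L + (m + 1)).choose L : ℝ) * (m + 1)
      = ((L + m).choose L : ℝ) * (L + m + 1) := by
    have h := Nat.add_one_mul_choose_eq (L + m) m
    rw [h1] at h
    rw [h2,
        show L + m + 1 = L + (m + 1) from by omega] at h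
    have := congrArg (fun n : ℕ => (n : ℝ)) h
    push_cast at this ⊢
    linarith
  have hC1 : ((L + m).choose L : ℝ) ≠ 0 := by
    exact_mod_cast (Nat.choose_pos (by omega)).ne'
  have hC2 : ((L + (m + 1)).choose L : ℝ) ≠ 0 := by
    exact_mod_cast (Nat.choose_pos (by omega)).ne'
  have hA : (ali X₀ X : ℝ) ≠ 0 := by exact_mod_cast hali
  have hπ0 : ∀ b, π b ≠ 0 := fun b => (hπpos b).ne'
  have hPX0 : (∏ i, π (X₀ i)) ≠ 0 := Finset.prod_ne_zero_iff.2 fun i _ => hπ0 _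
  have hPY : (∏ i, π (Y i)) ≠ 0 := Finset.prod_ne_zero_iff.2 fun i _ => hπ0 _
  have hm1 : ((L : ℝ) + m + 1) ≠ 0 := by positivity
  have hm : ((m : ℝ) + 1) ≠ 0 := by positivity
  rw [hprod]
  have step : ∀ (c1 c2 a A pY pj p0 n : ℝ), c1 ≠ 0 → c2 ≠ 0 → A ≠ 0 → pY ≠ 0 →
      pj ≠ 0 → p0 ≠ 0 → n ≠ 0 →
      (c1⁻¹ * a * (pY / p0)) * (pj * n⁻¹) / (c2⁻¹ * A * ((pj * pY) / p0))
        = (a * c2) / (c1 * n * A) := by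
    intro c1 c2 a A pY pj p0 n h1 h2 h3 h4 h5 h6 h7
    field_simp
  rw [step _ _ _ _ _ _ _ _ hC1 hC2 hA hPY (hπ0 _) hPX0 hm1]
  rw [div_eq_div_iff (by positivity) (by positivity)]
  linear_combination (ali X₀ Y : ℝ) * (ali X₀ X : ℝ) * hchoose
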